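/- For every α > 48 there are a constant c > 0 depending only on α and an absolute constant d0 ≥ 3 such that for all d ≥ d0, all σ > 0, and all integers s with 1 ≤ s ≤ √(d log d/2): sup_{θ ∈ Θ_s} E_θ[(L̂_s(y) − L(θ))²] ≤ c·Φ^L(σ,s). -/

import Mathlib

open MeasureTheory ProbabilityTheory
open Real
open scoped NNReal ENNReal



section OneVar

variable {σ : ℝ}

lemma aux_v_ne (hσ : 0 < σ) : Real.toNNReal (σ ^ 2) ≠ 0 := by
  simp [Real.toNNReal_eq_zero, not_le, pow_pos hσ, hσ.ne']

lemma aux_v_coe (hσ : 0 < σ) : ((Real.toNNReal (σ ^ 2) : ℝ≥0) : ℝ) = σ ^ 2 :=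
  Real.coe_toNNReal _ (sq_nonneg σ)

lemma integral_gauss0 (hσ : 0 < σ) (f : ℝ → ℝ) :
    ∫ x, f x ∂(gaussianReal 0 (Real.toNNReal (σ ^ 2)))
      = ∫ x, gaussianPDFReal 0 (Real.toNNReal (σ ^ 2)) x * f x := by
  rw [gaussianReal_of_var_ne_zero _ (aux_v_ne hσ)]
  have h : (gaussianPDF 0 (Real.toNNReal (σ ^ 2)))
      = fun x => ((Real.toNNReal (gaussianPDFReal 0 (Real.toNNReal (σ ^ 2)) x) : ℝ≥0) : ℝ≥0∞) :=
    rfl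
  rw [h, integral_withDensity_eq_integral_smul
    ((measurable_gaussianPDFReal _ _).real_toNNReal) f]
  congr 1
  ext x
  rw [NNReal.smul_def, Real.coe_toNNReal _ (gaussianPDFReal_nonneg _ _ x), smul_eq_mul]

lemma integrable_gauss0_iff (hσ : 0 < σ) (f : ℝ → ℝ) :
    Integrable f (gaussianReal 0 (Real.toNNReal (σ ^ 2)))
      ↔ Integrable (fun x => gaussianPDFReal 0 (Real.toNNReal (σ ^ 2)) x * f x) := by
  rw [gaussianReal_of_var_ne_zero _ (aux_v_ne hσ)]
  have h : (gaussianPDF 0 (Real.toNNReal (σ ^ 2)))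
      = fun x => ((Real.toNNReal (gaussianPDFReal 0 (Real.toNNReal (σ ^ 2)) x) : ℝ≥0) : ℝ≥0∞) :=
    rfl
  rw [h, integrable_withDensity_iff_integrable_smul
    ((measurable_gaussianPDFReal _ _).real_toNNReal)]
  constructor <;> intro h' <;> refine h'.congr (Filter.Eventually.of_forall fun x => ?_) <;>
    simp only [NNReal.smul_def, Real.coe_toNNReal _ (gaussianPDFReal_nonneg _ _ x), smul_eq_mul]

end OneVar

section OneVar2
variable {σ : ℝ}

lemma exp_quarter_key (hσ : 0 < σ) (x : ℝ) :
    gaussianPDFReal 0 (Real.toNNReal (σ ^ 2)) x * Real.exp (x ^ 2 / (4 * σ ^ 2))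
      = (Real.sqrt (2 * π * σ ^ 2))⁻¹ * Real.exp (-(4 * σ ^ 2)⁻¹ * x ^ 2) := by
  have h2 : (0:ℝ) < σ ^ 2 := by positivity
  simp only [gaussianPDFReal, aux_v_coe hσ, sub_zero]
  rw [mul_assoc, ← Real.exp_add]
  congr 2
  field_simp
  ring

lemma exp_quarter_int (hσ : 0 < σ) :
    Integrable (fun x => Real.exp (x ^ 2 / (4 * σ ^ 2)))
      (gaussianReal 0 (Real.toNNReal (σ ^ 2))) := by
  rw [integrable_gauss0_iff hσ]
  have hb : (0:ℝ) < (4 * σ ^ 2)⁻¹ := by positivity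
  refine ((integrable_exp_neg_mul_sq hb).const_mul ((Real.sqrt (2 * π * σ ^ 2))⁻¹)).congr
    (Filter.Eventually.of_forall fun x => ?_)
  exact (exp_quarter_key hσ x).symm

lemma exp_quarter_le (hσ : 0 < σ) :
    ∫ x, Real.exp (x ^ 2 / (4 * σ ^ 2)) ∂(gaussianReal 0 (Real.toNNReal (σ ^ 2))) ≤ 2 := by
  rw [integral_gauss0 hσ]
  have hb : (0:ℝ) < (4 * σ ^ 2)⁻¹ := by positivity
  have h1 : ∫ x, gaussianPDFReal 0 (Real.toNNReal (σ ^ 2)) x * Real.exp (x ^ 2 / (4 * σ ^ 2))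
      = (Real.sqrt (2 * π * σ ^ 2))⁻¹ * Real.sqrt (π / (4 * σ ^ 2)⁻¹) := by
    simp_rw [exp_quarter_key hσ]
    rw [integral_const_mul, integral_gaussian]
  rw [h1]
  have hπ := Real.pi_pos
  have ha : (0:ℝ) < Real.sqrt (2 * π * σ ^ 2) := Real.sqrt_pos.mpr (by positivity)
  rw [inv_mul_le_iff₀ ha]
  have h2 : π / (4 * σ ^ 2)⁻¹ = 4 * π * σ ^ 2 := by field_simp
  rw [h2]
  have h3 : (4 : ℝ) * π * σ ^ 2 ≤ (2 * Real.sqrt (2 * π * σ ^ 2)) ^ 2 := by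
    rw [mul_pow, Real.sq_sqrt (by positivity)]
    nlinarith
  calc Real.sqrt (4 * π * σ ^ 2) ≤ Real.sqrt ((2 * Real.sqrt (2 * π * σ ^ 2)) ^ 2) :=
        Real.sqrt_le_sqrt h3
    _ = 2 * Real.sqrt (2 * π * σ ^ 2) := Real.sqrt_sq (by positivity)
    _ = Real.sqrt (2 * π * σ ^ 2) * 2 := mul_comm _ _

lemma sq_le_exp_quarter (hσ : 0 < σ) (x : ℝ) :
    x ^ 2 ≤ 4 * σ ^ 2 * Real.exp (x ^ 2 / (4 * σ ^ 2)) := by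
  have h := Real.add_one_le_exp (x ^ 2 / (4 * σ ^ 2))
  have h2 : (0:ℝ) < 4 * σ ^ 2 := by positivity
  have h3 : x ^ 2 / (4 * σ ^ 2) * (4 * σ ^ 2) = x ^ 2 := by field_simp
  nlinarith [Real.exp_pos (x ^ 2 / (4 * σ ^ 2))]

lemma integrable_sq_gauss (hσ : 0 < σ) :
    Integrable (fun x : ℝ => x ^ 2) (gaussianReal 0 (Real.toNNReal (σ ^ 2))) := by
  refine Integrable.mono' ((exp_quarter_int hσ).const_mul (4 * σ ^ 2))
    (measurable_id.pow_const 2).aestronglyMeasurable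
    (Filter.Eventually.of_forall fun x => ?_)
  rw [Real.norm_eq_abs, abs_of_nonneg (sq_nonneg x)]
  exact sq_le_exp_quarter hσ x

lemma integral_sq_gauss_le (hσ : 0 < σ) :
    ∫ x, x ^ 2 ∂(gaussianReal 0 (Real.toNNReal (σ ^ 2))) ≤ 8 * σ ^ 2 := by
  have h1 : ∫ x, x ^ 2 ∂(gaussianReal 0 (Real.toNNReal (σ ^ 2)))
      ≤ ∫ x, 4 * σ ^ 2 * Real.exp (x ^ 2 / (4 * σ ^ 2))
          ∂(gaussianReal 0 (Real.toNNReal (σ ^ 2))) := by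
    refine integral_mono_of_nonneg (Filter.Eventually.of_forall fun x => sq_nonneg x)
      ((exp_quarter_int hσ).const_mul _) (Filter.Eventually.of_forall fun x => ?_)
    exact sq_le_exp_quarter hσ x
  rw [integral_const_mul] at h1
  nlinarith [exp_quarter_le hσ, sq_nonneg σ]

end OneVar2

section GFun
variable {σ : ℝ}

lemma g_meas (t : ℝ) : Measurable (fun x : ℝ => if t < x ^ 2 then x else 0) :=
  Measurable.ite (measurableSet_lt measurable_const (measurable_id.pow_const 2))
    measurable_id measurable_const

lemma g_sq_le (hσ : 0 < σ) (t x : ℝ) :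
    (if t < x ^ 2 then x else 0) ^ 2
      ≤ (8 * σ ^ 2 * Real.exp (-(t / (8 * σ ^ 2)))) * Real.exp (x ^ 2 / (4 * σ ^ 2)) := by
  have h2 : (0:ℝ) < 8 * σ ^ 2 := by positivity
  split_ifs with h
  · have hkey : (8 * σ ^ 2 * Real.exp (-(t / (8 * σ ^ 2)))) * Real.exp (x ^ 2 / (4 * σ ^ 2))
        = 8 * σ ^ 2 * (Real.exp (x ^ 2 / (8 * σ ^ 2))
            * Real.exp ((x ^ 2 - t) / (8 * σ ^ 2))) := by
      rw [mul_assoc, ← Real.exp_add, ← Real.exp_add]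
      congr 2
      field_simp
      ring
    rw [hkey]
    have h1 : x ^ 2 / (8 * σ ^ 2) ≤ Real.exp (x ^ 2 / (8 * σ ^ 2)) := by
      nlinarith [Real.add_one_le_exp (x ^ 2 / (8 * σ ^ 2))]
    have h3 : (1:ℝ) ≤ Real.exp ((x ^ 2 - t) / (8 * σ ^ 2)) :=
      Real.one_le_exp (div_nonneg (by linarith) h2.le)
    have h4 : x ^ 2 / (8 * σ ^ 2) * (8 * σ ^ 2) = x ^ 2 := by field_simp
    nlinarith [mul_le_mul h1 h3 zero_le_one (Real.exp_pos _).le,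
      div_nonneg (sq_nonneg x) h2.le]
  · have e1 := (Real.exp_pos (-(t / (8 * σ ^ 2)))).le
    have e2 := (Real.exp_pos (x ^ 2 / (4 * σ ^ 2))).le
    have : (0:ℝ) ^ 2 = 0 := by norm_num
    rw [this]
    positivity

lemma integrable_g_sq (hσ : 0 < σ) (t : ℝ) :
    Integrable (fun x => (if t < x ^ 2 then x else 0) ^ 2)
      (gaussianReal 0 (Real.toNNReal (σ ^ 2))) := by
  refine Integrable.mono'
    ((exp_quarter_int hσ).const_mul (8 * σ ^ 2 * Real.exp (-(t / (8 * σ ^ 2)))))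
    ((g_meas t).pow_const 2).aestronglyMeasurable (Filter.Eventually.of_forall fun x => ?_)
  rw [Real.norm_eq_abs, abs_of_nonneg (sq_nonneg _)]
  exact g_sq_le hσ t x

lemma integral_g_sq_le (hσ : 0 < σ) (t : ℝ) :
    ∫ x, (if t < x ^ 2 then x else 0) ^ 2 ∂(gaussianReal 0 (Real.toNNReal (σ ^ 2)))
      ≤ 16 * σ ^ 2 * Real.exp (-(t / (8 * σ ^ 2))) := by
  have h1 : ∫ x, (if t < x ^ 2 then x else 0) ^ 2 ∂(gaussianReal 0 (Real.toNNReal (σ ^ 2)))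
      ≤ ∫ x, (8 * σ ^ 2 * Real.exp (-(t / (8 * σ ^ 2)))) * Real.exp (x ^ 2 / (4 * σ ^ 2))
          ∂(gaussianReal 0 (Real.toNNReal (σ ^ 2))) :=
    integral_mono_of_nonneg (Filter.Eventually.of_forall fun x => sq_nonneg _)
      ((exp_quarter_int hσ).const_mul _) (Filter.Eventually.of_forall fun x => g_sq_le hσ t x)
  rw [integral_const_mul] at h1
  have h2 := exp_quarter_le hσ
  have h3 : (0:ℝ) < 8 * σ ^ 2 * Real.exp (-(t / (8 * σ ^ 2))) := by positivity
  nlinarith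

lemma integrable_g (hσ : 0 < σ) (t : ℝ) :
    Integrable (fun x => if t < x ^ 2 then x else 0)
      (gaussianReal 0 (Real.toNNReal (σ ^ 2))) := by
  refine Integrable.mono' ((integrable_const (1:ℝ)).add (integrable_g_sq hσ t))
    (g_meas t).aestronglyMeasurable (Filter.Eventually.of_forall fun x => ?_)
  rw [Real.norm_eq_abs]
  simp only [Pi.add_apply]
  set a := if t < x ^ 2 then x else 0
  have h1 : |a| ^ 2 = a ^ 2 := sq_abs a
  nlinarith [abs_nonneg a, sq_nonneg (|a| - 1)]

lemma neg_one_sq_nnreal : (⟨(-1:ℝ) ^ 2, sq_nonneg _⟩ : ℝ≥0) = 1 := by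
  ext
  norm_num

lemma integral_g_eq_zero (hσ : 0 < σ) (t : ℝ) :
    ∫ x, (if t < x ^ 2 then x else 0) ∂(gaussianReal 0 (Real.toNNReal (σ ^ 2))) = 0 := by
  have hmap : (gaussianReal 0 (Real.toNNReal (σ ^ 2))).map (fun x => -1 * x)
      = gaussianReal 0 (Real.toNNReal (σ ^ 2)) := by
    rw [show (fun x : ℝ => -1 * x) = ((-1 : ℝ) * ·) from rfl, gaussianReal_map_const_mul (-1)]
    congr 1
    · ring
    · ext; simp
  have h1 : ∫ x, (if t < x ^ 2 then x else 0) ∂(gaussianReal 0 (Real.toNNReal (σ ^ 2)))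
      = ∫ x, (if t < (-1 * x) ^ 2 then -1 * x else 0)
          ∂(gaussianReal 0 (Real.toNNReal (σ ^ 2))) := by
    conv_lhs => rw [← hmap]
    rw [integral_map (measurable_const_mul (-1)).aemeasurable
      (g_meas t).aestronglyMeasurable]
  have h2 : ∀ x : ℝ, (if t < (-1 * x) ^ 2 then -1 * x else 0)
      = -(if t < x ^ 2 then x else 0) := by
    intro x
    have : (-1 * x) ^ 2 = x ^ 2 := by ring
    rw [this]
    split_ifs <;> ring
  simp_rw [h2] at h1
  rw [integral_neg] at h1
  linarith

lemma map_center (hσ : 0 < σ) (θ0 : ℝ) :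
    (gaussianReal 0 (Real.toNNReal (σ ^ 2))).map (· + θ0)
      = gaussianReal θ0 (Real.toNNReal (σ ^ 2)) := by
  simpa using gaussianReal_map_add_const (μ := 0) (v := Real.toNNReal (σ ^ 2)) θ0

lemma integrable_sq_center (hσ : 0 < σ) (θ0 : ℝ) :
    Integrable (fun x => (x - θ0) ^ 2) (gaussianReal θ0 (Real.toNNReal (σ ^ 2))) := by
  have mp : MeasurePreserving (· + θ0) (gaussianReal 0 (Real.toNNReal (σ ^ 2)))
      (gaussianReal θ0 (Real.toNNReal (σ ^ 2))) :=
    ⟨measurable_add_const θ0, map_center hσ θ0⟩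
  refine (mp.integrable_comp ?_).mp ?_
  · exact ((measurable_id'.sub_const θ0).pow_const 2).aestronglyMeasurable
  · have : ((fun x => (x - θ0) ^ 2) ∘ (· + θ0)) = fun x : ℝ => x ^ 2 := by
      funext x; simp
    rw [this]
    exact integrable_sq_gauss hσ

lemma integral_sq_center_le (hσ : 0 < σ) (θ0 : ℝ) :
    ∫ x, (x - θ0) ^ 2 ∂(gaussianReal θ0 (Real.toNNReal (σ ^ 2))) ≤ 8 * σ ^ 2 := by
  rw [← map_center hσ θ0, integral_map (measurable_add_const θ0).aemeasurable
    ((measurable_id'.sub_const θ0).pow_const 2).aestronglyMeasurable]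
  simpa using integral_sq_gauss_le hσ

end GFun

section PiLevel

variable {d : ℕ} {μ : Fin d → Measure ℝ} [∀ i, IsProbabilityMeasure (μ i)]

lemma eval_preimage_eq_pi (i : Fin d) (s : Set ℝ) :
    (fun y : Fin d → ℝ => y i) ⁻¹' s
      = Set.pi Set.univ (Function.update (fun _ : Fin d => (Set.univ : Set ℝ)) i s) := by
  ext y
  simp only [Set.mem_preimage, Set.mem_pi, Set.mem_univ, forall_true_left]
  constructor
  · intro h j
    by_cases hj : j = i
    · subst hj; rw [Function.update_self]; exact h
    · rw [Function.update_of_ne hj]; trivial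
  · intro h
    have := h i
    rwa [Function.update_self] at this

lemma measurePreserving_eval (μ : Fin d → Measure ℝ) [∀ i, IsProbabilityMeasure (μ i)]
    (i : Fin d) :
    MeasurePreserving (fun y : Fin d → ℝ => y i) (Measure.pi μ) (μ i) := by
  refine ⟨measurable_pi_apply i, ?_⟩
  ext s hs
  rw [Measure.map_apply (measurable_pi_apply i) hs, eval_preimage_eq_pi i s, Measure.pi_pi]
  refine Finset.prod_eq_single_of_mem i (Finset.mem_univ i) (fun j _ hj => ?_) |>.trans ?_
  · rw [Function.update_of_ne hj]
    exact measure_univ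
  · rw [Function.update_self]

lemma integral_eval (i : Fin d) {f : ℝ → ℝ} (hf : AEStronglyMeasurable f (μ i)) :
    ∫ y, f (y i) ∂(Measure.pi μ) = ∫ x, f x ∂(μ i) := by
  conv_rhs => rw [← (_root_.measurePreserving_eval μ i).map_eq]
  rw [integral_map (measurable_pi_apply i).aemeasurable]
  rwa [(_root_.measurePreserving_eval μ i).map_eq]

lemma integrable_eval (i : Fin d) {f : ℝ → ℝ} (hf : Integrable f (μ i)) :
    Integrable (fun y : Fin d → ℝ => f (y i)) (Measure.pi μ) :=
  ((_root_.measurePreserving_eval μ i).integrable_comp hf.aestronglyMeasurable).mpr hf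

lemma pair_preimage_eq_pi {i j : Fin d} (hij : i ≠ j) (s t : Set ℝ) :
    (fun y : Fin d → ℝ => (y i, y j)) ⁻¹' (s ×ˢ t)
      = Set.pi Set.univ
          (Function.update (Function.update (fun _ : Fin d => (Set.univ : Set ℝ)) i s) j t) := by
  ext y
  simp only [Set.mem_preimage, Set.mem_prod, Set.mem_pi, Set.mem_univ, forall_true_left]
  constructor
  · rintro ⟨h1, h2⟩ k
    by_cases hk : k = j
    · subst hk; rw [Function.update_self]; exact h2
    · rw [Function.update_of_ne hk]
      by_cases hk' : k = i
      · subst hk'; rw [Function.update_self]; exact h1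
      · rw [Function.update_of_ne hk']; trivial
  · intro h
    have h1 := h i
    have h2 := h j
    rw [Function.update_of_ne hij, Function.update_self] at h1
    rw [Function.update_self] at h2
    exact ⟨h1, h2⟩

lemma map_pair {i j : Fin d} (hij : i ≠ j) :
    (Measure.pi μ).map (fun y => (y i, y j)) = (μ i).prod (μ j) := by
  refine (Measure.prod_eq fun s t hs ht => ?_).symm
  rw [Measure.map_apply ((measurable_pi_apply i).prodMk (measurable_pi_apply j)) (hs.prod ht),
    pair_preimage_eq_pi hij s t, Measure.pi_pi]
  have hsub : ({i, j} : Finset (Fin d)) ⊆ Finset.univ := Finset.subset_univ _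
  rw [← Finset.prod_subset hsub ?h1]
  · rw [Finset.prod_pair hij, Function.update_of_ne hij, Function.update_self,
      Function.update_self]
  · intro k _ hk
    simp only [Finset.mem_insert, Finset.mem_singleton] at hk
    push_neg at hk
    rw [Function.update_of_ne hk.2, Function.update_of_ne hk.1]
    exact measure_univ

lemma integrable_pair {i j : Fin d} (hij : i ≠ j) {f1 f2 : ℝ → ℝ}
    (h1 : Integrable f1 (μ i)) (h2 : Integrable f2 (μ j)) :
    Integrable (fun y : Fin d → ℝ => f1 (y i) * f2 (y j)) (Measure.pi μ) := by
  have hint : Integrable (fun p : ℝ × ℝ => f1 p.1 * f2 p.2) ((μ i).prod (μ j)) :=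
    h1.mul_prod h2
  rw [← map_pair hij] at hint
  exact (integrable_map_measure hint.aestronglyMeasurable
    (((measurable_pi_apply i).prodMk (measurable_pi_apply j)).aemeasurable)).mp hint

lemma integral_pair' {i j : Fin d} (hij : i ≠ j) {f1 f2 : ℝ → ℝ}
    (h1 : Integrable f1 (μ i)) (h2 : Integrable f2 (μ j)) :
    ∫ y, f1 (y i) * f2 (y j) ∂(Measure.pi μ) = (∫ x, f1 x ∂(μ i)) * ∫ x, f2 x ∂(μ j) := by
  have hint : Integrable (fun p : ℝ × ℝ => f1 p.1 * f2 p.2) ((μ i).prod (μ j)) :=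
    h1.mul_prod h2
  rw [← integral_prod_mul, ← map_pair (μ := μ) hij,
    integral_map (((measurable_pi_apply i).prodMk (measurable_pi_apply j)).aemeasurable)]
  rw [map_pair hij]
  exact hint.aestronglyMeasurable

end PiLevel


/-- Law of `y = θ + σ·ξ` with `ξ` i.i.d. standard normal: the product of Gaussians `N(θ j, σ²)`. -/
noncomputable def gaussMeasure (d : ℕ) (θ : Fin d → ℝ) (σ : ℝ) : Measure (Fin d → ℝ) :=
  Measure.pi fun j => gaussianReal (θ j) (Real.toNNReal (σ ^ 2))

/-- The sparsity class `Θ_s`: vectors with at most `s` nonzero coordinates. -/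
def Theta (d s : ℕ) : Set (Fin d → ℝ) := {θ | {j | θ j ≠ 0}.ncard ≤ s}

/-- The linear functional `L(θ) = ∑ θ_j`. -/
noncomputable def Lfun (d : ℕ) (θ : Fin d → ℝ) : ℝ := ∑ j, θ j

/-- The rate `Φ^L(σ, s) = σ² s² log(1 + d (log d) / s²)`. -/
noncomputable def PhiL (d : ℕ) (σ : ℝ) (s : ℕ) : ℝ :=
  σ ^ 2 * (s : ℝ) ^ 2 * Real.log (1 + (d : ℝ) * Real.log d / (s : ℝ) ^ 2)

/-- The non-adaptive estimators `L̂_s` (known `σ`). -/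
noncomputable def LhatS (d : ℕ) (α σ : ℝ) (s : ℕ) (y : Fin d → ℝ) : ℝ :=
  if (s : ℝ) ≤ Real.sqrt ((d : ℝ) * Real.log d / 2) then
    ∑ j, if α * σ ^ 2 * Real.log (1 + (d : ℝ) * Real.log d / (s : ℝ) ^ 2) < (y j) ^ 2
      then y j else 0
  else ∑ j, y j

set_option maxHeartbeats 1000000 in
/-- Lemma 5 (first bound): for `α > 48` and all `s ≤ √(d log d / 2)`,
`E_θ (L̂_s - L)² ≤ c Φ^L(σ, s)` uniformly over `Θ_s`. -/
theorem second_moment_LhatS :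
    ∀ α : ℝ, 48 < α → ∃ c : ℝ, 0 < c ∧ ∃ d0 : ℕ, 3 ≤ d0 ∧
      ∀ d : ℕ, d0 ≤ d → ∀ σ : ℝ, 0 < σ →
        ∀ s : ℕ, 1 ≤ s → (s : ℝ) ≤ Real.sqrt ((d : ℝ) * Real.log d / 2) →
          ∀ θ ∈ Theta d s,
            ∫⁻ y, ENNReal.ofReal ((LhatS d α σ s y - Lfun d θ) ^ 2) ∂(gaussMeasure d θ σ)
              ≤ ENNReal.ofReal (c * PhiL d σ s) := by
  intro α hα
  refine ⟨4 * α + 40, by linarith, 3, le_rfl, ?_⟩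
  intro d hd σ hσ s hs1 hs2 θ hθ
  classical
  -- numeric setup
  have hσ2 : (0:ℝ) < σ ^ 2 := by positivity
  have hd3 : (3:ℝ) ≤ (d:ℝ) := by exact_mod_cast hd
  have hlog3 : (1:ℝ) < Real.log 3 := by
    rw [Real.lt_log_iff_exp_lt (by norm_num : (0:ℝ) < 3)]
    calc Real.exp 1 < 2.7182818286 := Real.exp_one_lt_d9
      _ < 3 := by norm_num
  have hL1 : (1:ℝ) < Real.log d :=
    lt_of_lt_of_le hlog3 (Real.log_le_log (by norm_num) hd3)
  set L := Real.log d with hLdef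
  have hL0 : (0:ℝ) < L := by linarith
  have hs0 : (0:ℝ) < (s:ℝ) := by exact_mod_cast hs1
  have hs2' : ((s:ℝ)) ^ 2 ≤ (d:ℝ) * L / 2 := by
    have h0y : (0:ℝ) ≤ (d:ℝ) * L / 2 := by positivity
    exact (Real.le_sqrt hs0.le h0y).mp hs2
  set R := (d:ℝ) * L / (s:ℝ) ^ 2 with hRdef
  have hR2 : (2:ℝ) ≤ R := by
    rw [hRdef, le_div_iff₀ (by positivity)]
    linarith
  set lam := Real.log (1 + R) with hlamdef
  have hlam1 : (1:ℝ) ≤ lam := by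
    have h3R : (3:ℝ) ≤ 1 + R := by linarith
    calc (1:ℝ) ≤ Real.log 3 := hlog3.le
      _ ≤ lam := Real.log_le_log (by norm_num) h3R
  have hlam0 : (0:ℝ) < lam := lt_of_lt_of_le one_pos hlam1
  have hα0 : (0:ℝ) < α := by linarith
  set t := α * σ ^ 2 * lam with htdef
  have ht0 : (0:ℝ) ≤ t := by
    rw [htdef]
    exact (mul_pos (mul_pos hα0 hσ2) hlam0).le
  set v := Real.toNNReal (σ ^ 2) with hvdef
  set g := fun x : ℝ => if t < x ^ 2 then x else 0 with hgdef
  set μs := fun j : Fin d => gaussianReal (θ j) v with hμdef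
  have hP : gaussMeasure d θ σ = Measure.pi μs := rfl
  -- sets S and Sc
  set S := Finset.univ.filter (fun j : Fin d => θ j ≠ 0) with hSdef
  set Sc := Finset.univ.filter (fun j : Fin d => ¬ θ j ≠ 0) with hScdef
  have hScard : S.card ≤ s := by
    have hset : {j | θ j ≠ 0} = (S : Set (Fin d)) := by
      ext j; simp [hSdef]
    have := hθ
    rw [Theta] at this
    simp only [Set.mem_setOf_eq] at this
    rwa [hset, Set.ncard_coe_finset] at this
  have hθ0 : ∀ j ∈ Sc, θ j = 0 := by
    intro j hj
    simp only [hScdef, Finset.mem_filter, not_not] at hj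
    exact hj.2
  -- A and B
  set A := fun y : Fin d → ℝ => ∑ j ∈ S, (g (y j) - θ j) with hAdef
  set B := fun y : Fin d → ℝ => ∑ j ∈ Sc, g (y j) with hBdef
  have hsplit : ∀ y : Fin d → ℝ, LhatS d α σ s y - Lfun d θ = A y + B y := by
    intro y
    have h1 : LhatS d α σ s y = ∑ j, g (y j) := by
      rw [LhatS, if_pos hs2]
    rw [h1, Lfun, ← Finset.sum_sub_distrib,
      ← Finset.sum_filter_add_sum_filter_not Finset.univ (fun j => θ j ≠ 0)
        (fun j => g (y j) - θ j)]
    congr 1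
    refine Finset.sum_congr rfl fun j hj => ?_
    rw [hθ0 j hj, sub_zero]
  -- measurability
  have hgm : Measurable g := by
    rw [hgdef]
    exact Measurable.ite (measurableSet_lt measurable_const (measurable_id.pow_const 2))
      measurable_id measurable_const
  have hAm : Measurable A :=
    Finset.measurable_sum S fun j _ => (hgm.comp (measurable_pi_apply j)).sub measurable_const
  have hBm : Measurable B :=
    Finset.measurable_sum Sc fun j _ => hgm.comp (measurable_pi_apply j)
  -- single coordinate facts
  have hμ0 : ∀ j ∈ Sc, μs j = gaussianReal 0 v := by
    intro j hj
    rw [hμdef]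
    simp only
    rw [hθ0 j hj]
  -- A part
  have int_sq : ∀ j : Fin d, Integrable (fun y : Fin d → ℝ => (y j - θ j) ^ 2) (Measure.pi μs) :=
    fun j => integrable_eval (f := fun x => (x - θ j) ^ 2) j (integrable_sq_center hσ (θ j))
  have isq_le : ∀ j : Fin d, ∫ y, (y j - θ j) ^ 2 ∂(Measure.pi μs) ≤ 8 * σ ^ 2 := by
    intro j
    rw [integral_eval j ((measurable_id'.sub_const (θ j)).pow_const 2).aestronglyMeasurable]
    exact integral_sq_center_le hσ (θ j)
  set DA := fun y : Fin d → ℝ => (S.card : ℝ) * ∑ j ∈ S, (2 * (y j - θ j) ^ 2 + 2 * t)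
    with hDAdef
  have int_DA : Integrable DA (Measure.pi μs) := by
    refine Integrable.const_mul ?_ _
    exact integrable_finset_sum S fun j _ => ((int_sq j).const_mul 2).add (integrable_const _)
  have hA_le : ∀ y, (A y) ^ 2 ≤ DA y := by
    intro y
    have h1 : (A y) ^ 2 ≤ (S.card : ℝ) * ∑ j ∈ S, (g (y j) - θ j) ^ 2 :=
      sq_sum_le_card_mul_sum_sq
    refine h1.trans (mul_le_mul_of_nonneg_left (Finset.sum_le_sum fun j _ => ?_)
      (Nat.cast_nonneg _))
    -- (g x - θ j)^2 ≤ 2 (x - θ j)^2 + 2 t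
    set x := y j
    rw [hgdef]
    simp only
    split_ifs with h
    · nlinarith [sq_nonneg (x - θ j)]
    · push_neg at h
      nlinarith [sq_nonneg (2 * x - θ j), sq_nonneg x]
  have int_A2 : Integrable (fun y => (A y) ^ 2) (Measure.pi μs) := by
    refine Integrable.mono' int_DA (hAm.pow_const 2).aestronglyMeasurable
      (Filter.Eventually.of_forall fun y => ?_)
    rw [Real.norm_eq_abs, abs_of_nonneg (sq_nonneg _)]
    exact hA_le y
  have intDA_le : ∫ y, DA y ∂(Measure.pi μs) ≤ (s:ℝ) ^ 2 * (16 * σ ^ 2 + 2 * t) := by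
    rw [hDAdef]
    simp only
    rw [integral_const_mul]
    have hfs := integral_finset_sum (μ := Measure.pi μs) S
      (f := fun j (a : Fin d → ℝ) => 2 * (a j - θ j) ^ 2 + 2 * t)
      (fun j _ => ((int_sq j).const_mul 2).add (integrable_const _))
    rw [hfs]
    have h1 : ∀ j ∈ S, (∫ y, (2 * (y j - θ j) ^ 2 + 2 * t) ∂(Measure.pi μs))
        ≤ 16 * σ ^ 2 + 2 * t := by
      intro j _
      rw [integral_add ((int_sq j).const_mul 2) (integrable_const _), integral_const_mul,
        integral_const]
      simp only [measure_univ, probReal_univ, ENNReal.toReal_one, smul_eq_mul, one_mul]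
      nlinarith [isq_le j]
    have h2 : ∑ j ∈ S, (∫ y, (2 * (y j - θ j) ^ 2 + 2 * t) ∂(Measure.pi μs))
        ≤ (S.card : ℝ) * (16 * σ ^ 2 + 2 * t) := by
      calc ∑ j ∈ S, (∫ y, (2 * (y j - θ j) ^ 2 + 2 * t) ∂(Measure.pi μs))
          ≤ ∑ _j ∈ S, (16 * σ ^ 2 + 2 * t) := Finset.sum_le_sum h1
        _ = (S.card : ℝ) * (16 * σ ^ 2 + 2 * t) := by
            rw [Finset.sum_const, nsmul_eq_mul]
    have hcard : (S.card : ℝ) ≤ (s : ℝ) := by exact_mod_cast hScard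
    have hpos : (0:ℝ) ≤ 16 * σ ^ 2 + 2 * t := by linarith
    calc (S.card : ℝ) * ∑ j ∈ S, (∫ y, (2 * (y j - θ j) ^ 2 + 2 * t) ∂(Measure.pi μs))
        ≤ (S.card : ℝ) * ((S.card : ℝ) * (16 * σ ^ 2 + 2 * t)) := by
          refine mul_le_mul_of_nonneg_left h2 (Nat.cast_nonneg _)
      _ ≤ (s:ℝ) * ((s:ℝ) * (16 * σ ^ 2 + 2 * t)) := by
          exact mul_le_mul hcard (mul_le_mul_of_nonneg_right hcard hpos)
            (mul_nonneg (Nat.cast_nonneg _) hpos) hs0.le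
      _ = (s:ℝ) ^ 2 * (16 * σ ^ 2 + 2 * t) := by ring
  have intA2_le : ∫ y, (A y) ^ 2 ∂(Measure.pi μs) ≤ (s:ℝ) ^ 2 * (16 * σ ^ 2 + 2 * t) := by
    refine le_trans ?_ intDA_le
    exact integral_mono_of_nonneg (Filter.Eventually.of_forall fun y => sq_nonneg _)
      int_DA (Filter.Eventually.of_forall hA_le)
  -- B part
  have int_g_j : ∀ j ∈ Sc, Integrable (fun x : ℝ => g x) (μs j) := by
    intro j hj; rw [hμ0 j hj, hgdef]; exact integrable_g hσ t
  have int_gsq_j : ∀ j ∈ Sc, Integrable (fun x : ℝ => (g x) ^ 2) (μs j) := by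
    intro j hj; rw [hμ0 j hj, hgdef]; exact integrable_g_sq hσ t
  have int_g0 : ∀ j ∈ Sc, ∫ x, g x ∂(μs j) = 0 := by
    intro j hj; rw [hμ0 j hj, hgdef]; exact integral_g_eq_zero hσ t
  have int_gsq_le : ∀ j ∈ Sc, ∫ x, (g x) ^ 2 ∂(μs j)
      ≤ 16 * σ ^ 2 * Real.exp (-(t / (8 * σ ^ 2))) := by
    intro j hj; rw [hμ0 j hj, hgdef]; exact integral_g_sq_le hσ t
  have int_pair_int : ∀ i ∈ Sc, ∀ j ∈ Sc,
      Integrable (fun y : Fin d → ℝ => g (y i) * g (y j)) (Measure.pi μs) := by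
    intro i hi j hj
    by_cases hij : i = j
    · subst hij
      have h := integrable_eval i (int_gsq_j i hi)
      refine h.congr (Filter.Eventually.of_forall fun y => ?_)
      simp [sq]
    · exact integrable_pair hij (int_g_j i hi) (int_g_j j hj)
  have hB2eq : ∀ y, (B y) ^ 2 = ∑ i ∈ Sc, ∑ j ∈ Sc, g (y i) * g (y j) := by
    intro y
    rw [hBdef]
    simp only
    rw [sq, Finset.sum_mul_sum]
  have int_B2 : Integrable (fun y => (B y) ^ 2) (Measure.pi μs) := by
    have : (fun y => (B y) ^ 2)
        = fun y => ∑ i ∈ Sc, ∑ j ∈ Sc, g (y i) * g (y j) := funext hB2eq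
    rw [this]
    exact integrable_finset_sum Sc fun i hi =>
      integrable_finset_sum Sc fun j hj => int_pair_int i hi j hj
  have intB2_le : ∫ y, (B y) ^ 2 ∂(Measure.pi μs)
      ≤ (d:ℝ) * (16 * σ ^ 2 * Real.exp (-(t / (8 * σ ^ 2)))) := by
    have heq : ∫ y, (B y) ^ 2 ∂(Measure.pi μs)
        = ∑ i ∈ Sc, ∑ j ∈ Sc, ∫ y, g (y i) * g (y j) ∂(Measure.pi μs) := by
      have h0 : (fun y => (B y) ^ 2)
          = fun y => ∑ i ∈ Sc, ∑ j ∈ Sc, g (y i) * g (y j) := funext hB2eq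
      rw [h0, integral_finset_sum Sc fun i hi =>
        integrable_finset_sum Sc fun j hj => int_pair_int i hi j hj]
      exact Finset.sum_congr rfl fun i hi =>
        integral_finset_sum Sc fun j hj => int_pair_int i hi j hj
    rw [heq]
    have hdiag : ∀ i ∈ Sc, ∑ j ∈ Sc, ∫ y, g (y i) * g (y j) ∂(Measure.pi μs)
        ≤ 16 * σ ^ 2 * Real.exp (-(t / (8 * σ ^ 2))) := by
      intro i hi
      rw [← Finset.add_sum_erase Sc _ hi]
      have hz : ∑ j ∈ Sc.erase i, ∫ y, g (y i) * g (y j) ∂(Measure.pi μs) = 0 := by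
        refine Finset.sum_eq_zero fun j hj => ?_
        have hji : i ≠ j := fun h => (Finset.mem_erase.mp hj).1 h.symm
        rw [integral_pair' hji (int_g_j i hi) (int_g_j j (Finset.mem_of_mem_erase hj)),
          int_g0 i hi, zero_mul]
      rw [hz, add_zero]
      have hii : ∫ y, g (y i) * g (y i) ∂(Measure.pi μs) = ∫ x, (g x) ^ 2 ∂(μs i) := by
        rw [← integral_eval i ((hgm.pow_const 2).aestronglyMeasurable)]
        exact integral_congr_ae (Filter.Eventually.of_forall fun y => by simp [sq])
      rw [hii]
      exact int_gsq_le i hi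
    calc ∑ i ∈ Sc, ∑ j ∈ Sc, ∫ y, g (y i) * g (y j) ∂(Measure.pi μs)
        ≤ ∑ _i ∈ Sc, (16 * σ ^ 2 * Real.exp (-(t / (8 * σ ^ 2)))) := Finset.sum_le_sum hdiag
      _ = (Sc.card : ℝ) * (16 * σ ^ 2 * Real.exp (-(t / (8 * σ ^ 2)))) := by
          rw [Finset.sum_const, nsmul_eq_mul]
      _ ≤ (d:ℝ) * (16 * σ ^ 2 * Real.exp (-(t / (8 * σ ^ 2)))) := by
          refine mul_le_mul_of_nonneg_right ?_
            (mul_nonneg (by positivity) (Real.exp_pos _).le)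
          have : Sc.card ≤ d := le_trans (Finset.card_le_card (Finset.subset_univ _))
            (by simp)
          exact_mod_cast this
  -- the exponential bound
  have hexp_le : (d:ℝ) * (16 * σ ^ 2 * Real.exp (-(t / (8 * σ ^ 2)))) ≤ σ ^ 2 * (s:ℝ) ^ 2 := by
    have h1 : t / (8 * σ ^ 2) = (α / 8) * lam := by
      rw [htdef, div_eq_iff (ne_of_gt (by positivity : (0:ℝ) < 8 * σ ^ 2))]
      ring
    have h2 : Real.exp (-(t / (8 * σ ^ 2))) ≤ Real.exp (-(6 * lam)) := by
      rw [h1]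
      refine Real.exp_le_exp.mpr ?_
      have : 6 * lam ≤ (α / 8) * lam := by nlinarith
      linarith
    have hexplam : Real.exp lam = 1 + R := Real.exp_log (by linarith)
    have h3 : Real.exp (-(6 * lam)) = ((1 + R) ^ 6)⁻¹ := by
      rw [Real.exp_neg]
      congr 1
      rw [show (6:ℝ) * lam = (6:ℕ) * lam by norm_num, Real.exp_nat_mul, hexplam]
    have hd0 : (0:ℝ) < (d:ℝ) := by linarith
    have hR0 : (0:ℝ) < R := by linarith
    have hs2pos : (0:ℝ) < (s:ℝ) ^ 2 := pow_pos hs0 2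
    have hdL : (0:ℝ) < (d:ℝ) * L := mul_pos hd0 hL0
    have h4 : ((1 + R) ^ 6)⁻¹ ≤ (R ^ 6)⁻¹ := by
      refine inv_anti₀ (pow_pos hR0 6) ?_
      exact pow_le_pow_left₀ hR0.le (by linarith) 6
    have h5 : Real.exp (-(t / (8 * σ ^ 2))) ≤ (R ^ 6)⁻¹ := le_trans h2 (h3 ▸ h4)
    have hineq : (d:ℝ) * 16 * ((s:ℝ) ^ 2) ^ 6 ≤ (s:ℝ) ^ 2 * ((d:ℝ) * L) ^ 6 := by
      have h10 : ((s:ℝ) ^ 2) ^ 5 ≤ (((d:ℝ) * L) / 2) ^ 5 :=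
        pow_le_pow_left₀ hs2pos.le hs2' 5
      have h12 : (((d:ℝ) * L) / 2) ^ 5 = ((d:ℝ) * L) ^ 5 / 32 := by ring
      have hdL5 : (0:ℝ) ≤ ((d:ℝ) * L) ^ 5 := (pow_pos hdL 5).le
      have hstep : (d:ℝ) * (((d:ℝ) * L) ^ 5) ≤ ((d:ℝ) * L) ^ 6 := by
        have he : ((d:ℝ) * L) ^ 6 = ((d:ℝ) * L) * ((d:ℝ) * L) ^ 5 := by ring
        rw [he]
        refine mul_le_mul_of_nonneg_right ?_ hdL5
        nlinarith
      calc (d:ℝ) * 16 * ((s:ℝ) ^ 2) ^ 6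
          = (d:ℝ) * 16 * (((s:ℝ) ^ 2) * ((s:ℝ) ^ 2) ^ 5) := by ring
        _ ≤ (d:ℝ) * 16 * (((s:ℝ) ^ 2) * (((d:ℝ) * L) ^ 5 / 32)) := by
            refine mul_le_mul_of_nonneg_left (mul_le_mul_of_nonneg_left ?_ hs2pos.le)
              (by nlinarith)
            rw [← h12]; exact h10
        _ = (s:ℝ) ^ 2 * ((d:ℝ) * 16 * (((d:ℝ) * L) ^ 5 / 32)) := by ring
        _ ≤ (s:ℝ) ^ 2 * ((d:ℝ) * L) ^ 6 := by
            refine mul_le_mul_of_nonneg_left ?_ hs2pos.le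
            nlinarith [hstep]
    have hkey : (d:ℝ) * 16 * ((R ^ 6)⁻¹) ≤ (s:ℝ) ^ 2 := by
      have hR6 : R ^ 6 = ((d:ℝ) * L) ^ 6 / ((s:ℝ) ^ 2) ^ 6 := by
        rw [hRdef, div_pow]
      rw [hR6, inv_div,
        show (d:ℝ) * 16 * (((s:ℝ) ^ 2) ^ 6 / ((d:ℝ) * L) ^ 6)
          = ((d:ℝ) * 16 * ((s:ℝ) ^ 2) ^ 6) / ((d:ℝ) * L) ^ 6 from by ring,
        div_le_iff₀ (pow_pos hdL 6)]
      exact hineq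
    calc (d:ℝ) * (16 * σ ^ 2 * Real.exp (-(t / (8 * σ ^ 2))))
        ≤ (d:ℝ) * (16 * σ ^ 2 * ((R ^ 6)⁻¹)) := by
          refine mul_le_mul_of_nonneg_left ?_ hd0.le
          exact mul_le_mul_of_nonneg_left h5 (by positivity)
      _ = σ ^ 2 * ((d:ℝ) * 16 * ((R ^ 6)⁻¹)) := by ring
      _ ≤ σ ^ 2 * ((s:ℝ) ^ 2) := mul_le_mul_of_nonneg_left hkey hσ2.le
  -- final assembly
  have hint : Integrable (fun y => 2 * (A y) ^ 2 + 2 * (B y) ^ 2) (Measure.pi μs) :=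
    (int_A2.const_mul 2).add (int_B2.const_mul 2)
  have hPhi : PhiL d σ s = σ ^ 2 * (s:ℝ) ^ 2 * lam := rfl
  have hfinal : ∫ y, (2 * (A y) ^ 2 + 2 * (B y) ^ 2) ∂(Measure.pi μs)
      ≤ (4 * α + 40) * PhiL d σ s := by
    rw [integral_add (int_A2.const_mul 2) (int_B2.const_mul 2), integral_const_mul,
      integral_const_mul, hPhi]
    have hb1 : ∫ y, (A y) ^ 2 ∂(Measure.pi μs) ≤ (s:ℝ) ^ 2 * (16 * σ ^ 2 + 2 * t) := intA2_le
    have hb2 : ∫ y, (B y) ^ 2 ∂(Measure.pi μs) ≤ σ ^ 2 * (s:ℝ) ^ 2 := le_trans intB2_le hexp_le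
    have ht' : t = α * σ ^ 2 * lam := htdef
    have hs2pos : (0:ℝ) < (s:ℝ) ^ 2 := by positivity
    nlinarith [mul_pos hs2pos hσ2, mul_pos (mul_pos hs2pos hσ2) hlam0,
      mul_nonneg (mul_pos hs2pos hσ2).le (by linarith : (0:ℝ) ≤ lam - 1)]
  calc ∫⁻ y, ENNReal.ofReal ((LhatS d α σ s y - Lfun d θ) ^ 2) ∂(gaussMeasure d θ σ)
      ≤ ∫⁻ y, ENNReal.ofReal (2 * (A y) ^ 2 + 2 * (B y) ^ 2) ∂(Measure.pi μs) := by
        rw [hP]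
        refine lintegral_mono fun y => ENNReal.ofReal_le_ofReal ?_
        rw [hsplit y]
        nlinarith [sq_nonneg (A y - B y)]
    _ = ENNReal.ofReal (∫ y, (2 * (A y) ^ 2 + 2 * (B y) ^ 2) ∂(Measure.pi μs)) :=
        (ofReal_integral_eq_lintegral_ofReal hint
          (Filter.Eventually.of_forall fun y => by positivity)).symm
    _ ≤ ENNReal.ofReal ((4 * α + 40) * PhiL d σ s) := ENNReal.ofReal_le_ofReal hfinal
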